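/- arXiv:2106.01285 — 2 statements merged into one kernel-verified Lean document; each statement's English description precedes it below -/
import Mathlib

section
/- The Tsallis-regularized objective f attains its maximum over the probability simplex Δ^{m−1} at the unique point z* given componentwise by z*_a = g_a^{1/p} / Σ_b g_b^{1/p}; i.e., z* ∈ Δ^{m−1}, f(z) < f(z*) for every z ∈ Δ^{m−1} with z ≠ z*. -/
/-- The Tsallis-regularized objective
`f(z) = ⟨z, g⟩ + (s/(p+1))(1 − Σ_a z_a^(p+1))` with `s = (Σ_a g_a^(1/p))^p`. -/
noncomputable def tsallisObj (m : ℕ) (g : Fin m → ℝ) (p : ℝ)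
    (z : Fin m → ℝ) : ℝ :=
  (∑ a, z a * g a) +
    ((∑ a, g a ^ (1 / p)) ^ p / (p + 1)) * (1 - ∑ a, z a ^ (p + 1))

/-- The Tsallis best response `z*_a = g_a^(1/p) / Σ_b g_b^(1/p)`. -/
noncomputable def tsallisBR (m : ℕ) (g : Fin m → ℝ) (p : ℝ) : Fin m → ℝ :=
  fun a => g a ^ (1 / p) / ∑ b, g b ^ (1 / p)

/-- Tangent-line strict inequality for `t ↦ t^(p+1)` at `c`. -/
lemma tsallis_key (p : ℝ) (hp0 : 0 < p) (c t : ℝ) (hc : 0 < c) (ht : 0 ≤ t)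
    (hne : t ≠ c) :
    0 < (c - t) * c ^ p + (t ^ (p + 1) - c ^ (p + 1)) / (p + 1) := by
  set h : ℝ → ℝ := fun y => (c - y) * c ^ p + (y ^ (p + 1) - c ^ (p + 1)) / (p + 1) with hh
  have hd : ∀ x : ℝ, HasDerivAt h (x ^ p - c ^ p) x := by
    intro x
    have h1 : HasDerivAt (fun y : ℝ => y ^ (p + 1)) ((p + 1) * x ^ p) x := by
      have := Real.hasDerivAt_rpow_const (x := x) (p := p + 1) (Or.inr (by linarith))
      simpa [add_sub_cancel_right] using this
    have h2 : HasDerivAt (fun y : ℝ => (c - y) * c ^ p) (-c ^ p) x := by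
      simpa using ((hasDerivAt_id x).const_sub c).mul_const (c ^ p)
    have hp1 : p + 1 ≠ 0 := by linarith
    have h3 : HasDerivAt (fun y : ℝ => (y ^ (p + 1) - c ^ (p + 1)) / (p + 1)) (x ^ p) x := by
      have := (h1.sub_const (c ^ (p + 1))).div_const (p + 1)
      simpa [mul_comm, mul_div_assoc, mul_div_cancel_left₀, hp1] using this
    have := h2.add h3
    rw [neg_add_eq_sub] at this; exact this
  have hcont : Continuous h := by
    refine continuous_iff_continuousAt.2 fun x => (hd x).differentiableAt.continuousAt
  have hc0 : h c = 0 := by simp [hh]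
  rcases lt_or_gt_of_ne hne with hlt | hgt
  · have hanti : StrictAntiOn h (Set.Icc 0 c) := by
      refine strictAntiOn_of_deriv_neg (convex_Icc 0 c) hcont.continuousOn ?_
      intro x hx
      rw [interior_Icc] at hx
      rw [(hd x).deriv]
      have : x ^ p < c ^ p := Real.rpow_lt_rpow hx.1.le hx.2 hp0
      linarith
    have := hanti ⟨ht, hlt.le⟩ ⟨hc.le, le_refl c⟩ hlt
    rw [hc0] at this; simpa [hh] using this
  · have hmono : StrictMonoOn h (Set.Ici c) := by
      refine strictMonoOn_of_deriv_pos (convex_Ici c) hcont.continuousOn ?_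
      intro x hx
      rw [interior_Ici] at hx
      rw [(hd x).deriv]
      have : c ^ p < x ^ p := Real.rpow_lt_rpow hc.le hx hp0
      linarith
    have := hmono (Set.self_mem_Ici) (Set.mem_Ici.2 hgt.le) hgt
    rw [hc0] at this; simpa [hh] using this


/-- the Tsallis-regularized objective attains its maximum over the
probability simplex at the unique point `z*`. -/
theorem tsallisBR_unique_max (m : ℕ) (hm : 1 ≤ m) (g : Fin m → ℝ)
    (hg : ∀ a, 0 < g a) (p : ℝ) (hp : p ∈ Set.Ioc (0 : ℝ) 1) :
    tsallisBR m g p ∈ stdSimplex ℝ (Fin m) ∧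
    ∀ z ∈ stdSimplex ℝ (Fin m), z ≠ tsallisBR m g p →
      tsallisObj m g p z < tsallisObj m g p (tsallisBR m g p) := by
  obtain ⟨hp0, hp1⟩ := hp
  set S : ℝ := ∑ b, g b ^ (1 / p) with hS
  have hSpos : 0 < S := by
    apply Finset.sum_pos
    · intro i _; exact Real.rpow_pos_of_pos (hg i) _
    · have : Nonempty (Fin m) := ⟨⟨0, by omega⟩⟩
      exact Finset.univ_nonempty
  set w : Fin m → ℝ := tsallisBR m g p with hw
  have hwdef : ∀ a, w a = g a ^ (1 / p) / S := fun a => rfl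
  have hwpos : ∀ a, 0 < w a := fun a =>
    div_pos (Real.rpow_pos_of_pos (hg a) _) hSpos
  have hga : ∀ a, g a = S ^ p * (w a) ^ p := by
    intro a
    rw [hwdef a, Real.div_rpow (Real.rpow_nonneg (hg a).le _) hSpos.le,
      ← Real.rpow_mul (hg a).le, one_div_mul_cancel hp0.ne', Real.rpow_one]
    rw [mul_div_cancel₀ _ (Real.rpow_pos_of_pos hSpos p).ne']
  have hmem : w ∈ stdSimplex ℝ (Fin m) := by
    constructor
    · intro a; exact (hwpos a).le
    · simp only [hwdef]
      rw [← Finset.sum_div, div_self hSpos.ne']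
  refine ⟨hmem, fun z hz hne => ?_⟩
  have key : 0 < tsallisObj m g p w - tsallisObj m g p z := by
    have heq : tsallisObj m g p w - tsallisObj m g p z =
        ∑ a, S ^ p * ((w a - z a) * (w a) ^ p +
          ((z a) ^ (p + 1) - (w a) ^ (p + 1)) / (p + 1)) := by
      have hterm : ∀ a, S ^ p * ((w a - z a) * (w a) ^ p +
          ((z a) ^ (p + 1) - (w a) ^ (p + 1)) / (p + 1)) =
          (w a * g a - z a * g a) +
            (S ^ p / (p + 1)) * ((z a) ^ (p + 1) - (w a) ^ (p + 1)) := by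
        intro a; rw [hga a]; ring
      simp only [hterm]
      unfold tsallisObj
      rw [← hS]
      rw [Finset.sum_add_distrib, Finset.sum_sub_distrib, ← Finset.mul_sum,
        Finset.sum_sub_distrib]
      ring
    rw [heq]
    have hnonneg : ∀ a ∈ Finset.univ, (0:ℝ) ≤ S ^ p * ((w a - z a) * (w a) ^ p +
        ((z a) ^ (p + 1) - (w a) ^ (p + 1)) / (p + 1)) := by
      intro a _
      rcases eq_or_ne (z a) (w a) with h | h
      · simp [h]
      · exact le_of_lt (mul_pos (Real.rpow_pos_of_pos hSpos _)
          (tsallis_key p hp0 (w a) (z a) (hwpos a) (hz.1 a) h))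
    obtain ⟨a, ha⟩ := Function.ne_iff.1 hne
    refine Finset.sum_pos' hnonneg ⟨a, Finset.mem_univ a, ?_⟩
    exact mul_pos (Real.rpow_pos_of_pos hSpos _)
      (tsallis_key p hp0 (w a) (z a) (hwpos a) (hz.1 a) ha)
  linarith
end

section
/- For every x in the probability simplex Δ^{m−1} and every g ∈ ℝ^m, the Euclidean projections Π_Δ(x + η g) converge as η → ∞ to a point z ∈ Δ^{m−1} that is supported on the argmax coordinates of g and maximizes the linear objective over the simplex: ⟨z, g⟩ = max_{z' ∈ Δ^{m−1}} ⟨z', g⟩ = max_a g_a; in particular, the limit of the projected infinite-step-size gradient ascent update is a best response to g. -/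
open scoped RealInnerProductSpace


/-- for `x` in the simplex and any payoff vector `g`, the
Euclidean projections `Π_Δ(x + η g)` converge as `η → ∞` to a point `z` of the
simplex supported on the argmax coordinates of `g` which maximizes the linear
objective `⟨·, g⟩` over the simplex, with `⟨z, g⟩ = max_a g_a`; i.e. the limit
of the projected infinite-step-size gradient ascent update is a best response
to `g`.  (Here `P η` is required to be the Euclidean projection of `x + η • g`
onto the simplex, which is characterized as the closest point of the simplex.) -/
theorem proj_simplex_tendsto_bestResponse (m : ℕ) (hm : 1 ≤ m)
    (x g : EuclideanSpace ℝ (Fin m))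
    (hx : (∀ a, 0 ≤ x a) ∧ ∑ a, x a = 1)
    (P : ℝ → EuclideanSpace ℝ (Fin m))
    (hP : ∀ η : ℝ,
      ((∀ a, 0 ≤ P η a) ∧ ∑ a, P η a = 1) ∧
      ∀ w : EuclideanSpace ℝ (Fin m), ((∀ a, 0 ≤ w a) ∧ ∑ a, w a = 1) →
        ‖x + η • g - P η‖ ≤ ‖x + η • g - w‖) :
    ∃ z : EuclideanSpace ℝ (Fin m),
      ((∀ a, 0 ≤ z a) ∧ ∑ a, z a = 1) ∧
      Filter.Tendsto P Filter.atTop (nhds z) ∧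
      (∀ a, z a ≠ 0 → ∀ b, g b ≤ g a) ∧
      (∀ w : EuclideanSpace ℝ (Fin m), ((∀ a, 0 ≤ w a) ∧ ∑ a, w a = 1) →
        ∑ a, w a * g a ≤ ∑ a, z a * g a) ∧
      ∃ a₀ : Fin m, (∀ b, g b ≤ g a₀) ∧ ∑ a, z a * g a = g a₀ := by
  have hne : (Finset.univ : Finset (Fin m)).Nonempty := ⟨⟨0, hm⟩, Finset.mem_univ _⟩
  obtain ⟨a₀, -, ha₀⟩ := Finset.exists_max_image Finset.univ g hne
  simp only [Finset.mem_univ, forall_const] at ha₀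
  -- the argmax set and the max of x over it
  obtain ⟨aM, haM, hxM⟩ := Finset.exists_max_image
    (Finset.univ.filter (fun a => g a = g a₀)) x
    ⟨a₀, by simp⟩
  have hgaM : g aM = g a₀ := by simpa using haM
  set M := x aM with hM
  -- find the water level c
  have hcont : Continuous (fun c : ℝ =>
      ∑ a, if g a = g a₀ then max (x a - c) 0 else 0) := by
    apply continuous_finset_sum
    intro a _
    by_cases h : g a = g a₀ <;> simp only [h, if_true, if_false]
    · exact (continuous_const.sub continuous_id).max continuous_const
    · exact continuous_const
  have hfM : (∑ a, if g a = g a₀ then max (x a - M) 0 else 0) = 0 := by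
    apply Finset.sum_eq_zero
    intro a _
    by_cases h : g a = g a₀ <;> simp only [h, if_true, if_false]
    have hax : x a ≤ M := hxM a (by simp [h])
    exact max_eq_right (by linarith)
  have hfM1 : (1:ℝ) ≤ ∑ a, if g a = g a₀ then max (x a - (M - 1)) 0 else 0 := by
    have h1 : (if g aM = g a₀ then max (x aM - (M - 1)) 0 else 0) = 1 := by
      rw [if_pos hgaM, hM]
      norm_num
    calc (1:ℝ) = _ := h1.symm
      _ ≤ _ := Finset.single_le_sum (f := fun a => if g a = g a₀ then max (x a - (M-1)) 0 else 0)
          (fun a _ => by by_cases h : g a = g a₀ <;> simp [h, le_max_right]) (Finset.mem_univ aM)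
  obtain ⟨c, -, hc⟩ : ∃ c ∈ Set.Icc (M - 1) M,
      (∑ a, if g a = g a₀ then max (x a - c) 0 else 0) = 1 := by
    have := intermediate_value_Icc' (by linarith : M - 1 ≤ M) hcont.continuousOn
    have h1mem : (1:ℝ) ∈ Set.Icc ((fun c : ℝ => ∑ a, if g a = g a₀ then max (x a - c) 0 else 0) M)
        ((fun c : ℝ => ∑ a, if g a = g a₀ then max (x a - c) 0 else 0) (M - 1)) := by
      simp only [hfM]
      exact ⟨by norm_num, hfM1⟩
    obtain ⟨c, hc1, hc2⟩ := this h1mem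
    exact ⟨c, hc1, hc2⟩
  -- the limit point
  set z : EuclideanSpace ℝ (Fin m) :=
    WithLp.toLp 2 (fun a => if g a = g a₀ then max (x a - c) 0 else 0 : Fin m → ℝ) with hzdef
  have hzapp : ∀ a, z a = if g a = g a₀ then max (x a - c) 0 else 0 := fun a => rfl
  have hzS : (∀ a, 0 ≤ z a) ∧ ∑ a, z a = 1 := by
    constructor
    · intro a
      rw [hzapp]
      by_cases h : g a = g a₀ <;> simp [h, le_max_right]
    · simpa only [hzapp] using hc
  -- z's objective value
  have hzg : ∑ a, z a * g a = g a₀ := by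
    have : ∀ a : Fin m, z a * g a = z a * g a₀ := by
      intro a
      rw [hzapp]
      by_cases h : g a = g a₀ <;> simp [h]
    rw [Finset.sum_congr rfl (fun a _ => this a), ← Finset.sum_mul, hzS.2, one_mul]
  -- threshold for the step size
  set η₀ : ℝ := Finset.univ.sup' hne (fun a => (x a - c) / (g a₀ - g a)) with hη₀
  have hkey : ∀ η : ℝ, η₀ ≤ η → P η = z := by
    intro η hη
    -- variational inequality
    have hVI : ∀ w : EuclideanSpace ℝ (Fin m), ((∀ a, 0 ≤ w a) ∧ ∑ a, w a = 1) →
        ⟪x + η • g - z, w - z⟫ ≤ 0 := by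
      intro w hw
      have hinner : ⟪x + η • g - z, w - z⟫
          = ∑ a, (x a + η * g a - z a) * (w a - z a) := by
        simp [PiLp.inner_apply, RCLike.inner_apply, mul_comm]
      rw [hinner]
      set τ : ℝ := c + η * g a₀ with hτ
      have hsplit : ∀ a : Fin m, (x a + η * g a - z a) * (w a - z a)
          = (x a + η * g a - z a - τ) * (w a - z a) + τ * (w a - z a) := by
        intro a; ring
      rw [Finset.sum_congr rfl (fun a _ => hsplit a), Finset.sum_add_distrib]
      have hsum2 : ∑ a, τ * (w a - z a) = 0 := by
        rw [← Finset.mul_sum, Finset.sum_sub_distrib, hw.2, hzS.2]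
        ring
      rw [hsum2, add_zero]
      apply Finset.sum_nonpos
      intro a _
      by_cases hga : g a = g a₀
      · by_cases hxc : x a - c ≤ 0
        · have hza : z a = 0 := by rw [hzapp, if_pos hga]; exact max_eq_right hxc
          apply mul_nonpos_of_nonpos_of_nonneg
          · rw [hza, hga, hτ]; linarith
          · rw [hza, sub_zero]; exact hw.1 a
        · have hza : z a = x a - c := by
            rw [hzapp, if_pos hga]; exact max_eq_left (by linarith)
          have : x a + η * g a - z a - τ = 0 := by rw [hza, hga, hτ]; ring
          rw [this, zero_mul]
      · have hza : z a = 0 := by rw [hzapp, if_neg hga]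
        have hgl : 0 < g a₀ - g a := by
          have := ha₀ a
          rcases lt_or_eq_of_le this with h | h
          · linarith
          · exact absurd h hga
        have hratio : (x a - c) / (g a₀ - g a) ≤ η :=
          le_trans (Finset.le_sup' (fun b => (x b - c) / (g a₀ - g b)) (Finset.mem_univ a)) hη
        have hxcle : x a - c ≤ η * (g a₀ - g a) := by
          rw [div_le_iff₀ hgl] at hratio; linarith
        apply mul_nonpos_of_nonpos_of_nonneg
        · rw [hza, hτ]; nlinarith
        · rw [hza, sub_zero]; exact hw.1 a
    -- uniqueness of the minimizer
    obtain ⟨hPs, hPmin⟩ := hP η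
    have h1 : ‖x + η • g - P η‖ ≤ ‖x + η • g - z‖ := hPmin z hzS
    have hVIp := hVI (P η) hPs
    have hexp : ‖x + η • g - P η‖ ^ 2
        = ‖x + η • g - z‖ ^ 2 - 2 * ⟪x + η • g - z, P η - z⟫ + ‖P η - z‖ ^ 2 := by
      have heq : x + η • g - P η = (x + η • g - z) - (P η - z) := by abel
      rw [heq, norm_sub_sq_real]
    have hsq : ‖x + η • g - P η‖ ^ 2 ≤ ‖x + η • g - z‖ ^ 2 := by
      apply pow_le_pow_left₀ (norm_nonneg _) h1
    have hnz : ‖P η - z‖ ^ 2 ≤ 0 := by nlinarith [norm_nonneg (P η - z)]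
    have : ‖P η - z‖ = 0 := by
      have := norm_nonneg (P η - z)
      nlinarith
    have := norm_eq_zero.mp this
    exact sub_eq_zero.mp this
  -- convergence
  have htend : Filter.Tendsto P Filter.atTop (nhds z) := by
    apply Filter.Tendsto.congr' _ tendsto_const_nhds
    filter_upwards [Filter.eventually_ge_atTop η₀] with η hη
    exact (hkey η hη).symm
  refine ⟨z, hzS, htend, ?_, ?_, a₀, ha₀, hzg⟩
  · intro a hza b
    by_cases h : g a = g a₀
    · rw [h]; exact ha₀ b
    · exact absurd (by rw [hzapp, if_neg h]) hza
  · intro w hw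
    rw [hzg]
    calc ∑ a, w a * g a ≤ ∑ a, w a * g a₀ :=
          Finset.sum_le_sum (fun a _ => mul_le_mul_of_nonneg_left (ha₀ a) (hw.1 a))
      _ = g a₀ := by rw [← Finset.sum_mul, hw.2, one_mul]
end
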